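/- A finite word model W satisfies a normal-form FO²MOD formula φ if and only if every (l₁,…,l_m)-full type realized in W is φ-consistent. -/

import Mathlib

/-! FO²MOD over finite words: a word is a model iff every realized full type is
φ-consistent. -/

/-- The five order formulas over words. -/
inductive WOrd where
  | eq | succ | pred | farR | farL
deriving DecidableEq

instance : Fintype WOrd where
  elems := {.eq, .succ, .pred, .farR, .farL}
  complete := by intro x; cases x <;> decide

/-- The unique order formula holding between two positions of a word. -/
def ordOf {N : ℕ} (i j : Fin N) : WOrd :=
  if i = j then .eq
  else if (j : ℕ) = (i : ℕ) + 1 then .succ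
  else if (i : ℕ) = (j : ℕ) + 1 then .pred
  else if i < j then .farR
  else .farL

/-- A normal-form FO²MOD formula over unary signature `τ`. -/
structure NF (τ : Type) where
  n : ℕ
  m : ℕ
  npos : 0 < n
  mpos : 0 < m
  chi : (τ → Bool) → (τ → Bool) → WOrd → Bool
  chis : Fin n → (τ → Bool) → (τ → Bool) → WOrd → Bool
  psi : Fin m → (τ → Bool) → (τ → Bool) → WOrd → Bool
  isLE : Fin m → Bool
  k : Fin m → ℕ
  l : Fin m → ℕ
  lpos : ∀ j, 0 < l j
  klt : ∀ j, k j < l j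

/-- The comparison `a ⋈ⱼ kⱼ` of the `j`-th modulo conjunct. -/
def NF.bow {τ : Type} (φ : NF τ) (j : Fin φ.m) (a : ℕ) : Prop :=
  if φ.isLE j then a ≤ φ.k j else φ.k j ≤ a

/-- Satisfaction of a normal-form formula in a finite word. -/
def WSat {τ : Type} [Fintype τ] [DecidableEq τ]
    (φ : NF τ) (N : ℕ) (lab : Fin N → τ → Bool) : Prop :=
  (∀ i j : Fin N, φ.chi (lab i) (lab j) (ordOf i j) = true) ∧
  (∀ c : Fin φ.n, ∀ i : Fin N, ∃ j : Fin N, φ.chis c (lab i) (lab j) (ordOf i j) = true) ∧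
  (∀ c : Fin φ.m, ∀ i : Fin N,
    φ.bow c ((Finset.univ.filter
      fun j : Fin N => φ.psi c (lab i) (lab j) (ordOf i j) = true).card % φ.l c))

/-- The number of positions of 1-type `β` in relative position `θ` to `v`. -/
def wcount {τ : Type} [Fintype τ] [DecidableEq τ] {N : ℕ}
    (lab : Fin N → τ → Bool) (v : Fin N) (θ : WOrd) (β : τ → Bool) : ℕ :=
  (Finset.univ.filter fun w : Fin N => ordOf v w = θ ∧ lab w = β).card

/-- The `(l₁,…,l_m)`-full type realized by position `v`: for each order formula
and each 1-type it records the occurrence bit and the counts modulo each `lⱼ`. -/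
def ftp {τ : Type} [Fintype τ] [DecidableEq τ] {N : ℕ} (φ : NF τ)
    (lab : Fin N → τ → Bool) (v : Fin N) :
    WOrd → (τ → Bool) → ℕ × (Fin φ.m → ℕ) :=
  fun θ β => (min 1 (wcount lab v θ β), fun j => wcount lab v θ β % φ.l j)

/-- `φ`-consistency of a full type `ft` whose `θ₌` 1-type is `α`:
(1) no realized pair violates the `∀∀` conjunct; (2) each `∀∃` conjunct has a
witness; (3) each modulo conjunct has the right number of witnesses. -/
def Consistent {τ : Type} [Fintype τ] [DecidableEq τ] (φ : NF τ)
    (α : τ → Bool) (ft : WOrd → (τ → Bool) → ℕ × (Fin φ.m → ℕ)) : Prop :=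
  (∀ (θ : WOrd) (β : τ → Bool),
      ft θ β ≠ (0, fun _ => 0) → φ.chi α β θ = true) ∧
  (∀ c : Fin φ.n, ∃ (θ : WOrd) (β : τ → Bool),
      ft θ β ≠ (0, fun _ => 0) ∧ φ.chis c α β θ = true) ∧
  (∀ c : Fin φ.m,
    φ.bow c ((∑ θ : WOrd, ∑ β : τ → Bool,
      if φ.psi c α β θ = true then (ft θ β).2 c else 0) % φ.l c))

lemma ftp_ne_iff {τ : Type} [Fintype τ] [DecidableEq τ] {N : ℕ} (φ : NF τ)
    (lab : Fin N → τ → Bool) (v : Fin N) (θ : WOrd) (β : τ → Bool) :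
    ftp φ lab v θ β ≠ (0, fun _ => 0) ↔ ∃ w : Fin N, ordOf v w = θ ∧ lab w = β := by
  classical
  unfold ftp
  constructor
  · intro h
    by_contra hc
    push_neg at hc
    have : wcount lab v θ β = 0 := by
      unfold wcount
      rw [Finset.card_eq_zero, Finset.filter_eq_empty_iff]
      intro w _
      exact fun ⟨h1, h2⟩ => hc w h1 h2
    simp [this] at h
  · rintro ⟨w, hw1, hw2⟩ h
    have : 0 < wcount lab v θ β := by
      unfold wcount
      exact Finset.card_pos.mpr ⟨w, by simp [hw1, hw2]⟩
    have h1 := congrArg Prod.fst h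
    simp at h1
    omega

lemma count_split {τ : Type} [Fintype τ] [DecidableEq τ] {N : ℕ}
    (lab : Fin N → τ → Bool) (v : Fin N) (P : (τ → Bool) → WOrd → Bool) :
    (Finset.univ.filter fun j : Fin N => P (lab j) (ordOf v j) = true).card
      = ∑ θ : WOrd, ∑ β : τ → Bool,
          if P β θ = true then wcount lab v θ β else 0 := by
  classical
  unfold wcount
  simp_rw [Finset.card_filter]
  have : ∀ (θ : WOrd) (β : τ → Bool),
      (if P β θ = true then ∑ j : Fin N,
         if ordOf v j = θ ∧ lab j = β then 1 else 0 else 0)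
      = ∑ j : Fin N, if ordOf v j = θ ∧ lab j = β ∧ P β θ = true then 1 else 0 := by
    intro θ β
    split
    · next h => exact Finset.sum_congr rfl (fun j _ => by simp [h, and_assoc])
    · next h => symm; apply Finset.sum_eq_zero; intro j _; simp [h]
  simp_rw [this]
  rw [show (∑ θ : WOrd, ∑ β : τ → Bool, ∑ j : Fin N,
      if ordOf v j = θ ∧ lab j = β ∧ P β θ = true then 1 else 0)
    = ∑ j : Fin N, ∑ θ : WOrd, ∑ β : τ → Bool,
      if ordOf v j = θ ∧ lab j = β ∧ P β θ = true then 1 else 0 from by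
    rw [Finset.sum_comm]
    rw [show (∑ β : τ → Bool, ∑ θ : WOrd, ∑ j : Fin N,
        if ordOf v j = θ ∧ lab j = β ∧ P β θ = true then 1 else 0)
      = ∑ β : τ → Bool, ∑ j : Fin N, ∑ θ : WOrd,
        if ordOf v j = θ ∧ lab j = β ∧ P β θ = true then 1 else 0 from
      Finset.sum_congr rfl (fun β _ => Finset.sum_comm)]
    rw [Finset.sum_comm]
    exact Finset.sum_congr rfl (fun j _ => Finset.sum_comm)]
  refine Finset.sum_congr rfl (fun j _ => ?_)
  rw [Finset.sum_eq_single (ordOf v j)]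
  · rw [Finset.sum_eq_single (lab j)]
    · simp
    · intro β _ hβ; simp [Ne.symm hβ]
    · simp
  · intro θ _ hθ
    apply Finset.sum_eq_zero; intro β _; simp [Ne.symm hθ]
  · simp

/-- **Lemma 4 (words).** A finite word satisfies a normal-form FO²MOD formula
iff every full type realized in it is `φ`-consistent. -/
theorem stmt_5 {τ : Type} [Fintype τ] [DecidableEq τ] (φ : NF τ)
    (N : ℕ) (hN : 0 < N) (lab : Fin N → τ → Bool) :
    WSat φ N lab ↔ ∀ v : Fin N, Consistent φ (lab v) (ftp φ lab v) := by
  classical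
  constructor
  · rintro ⟨h1, h2, h3⟩ v
    refine ⟨?_, ?_, ?_⟩
    · intro θ β hne
      obtain ⟨w, hw1, hw2⟩ := (ftp_ne_iff φ lab v θ β).1 hne
      subst hw1; subst hw2
      exact h1 v w
    · intro c
      obtain ⟨j, hj⟩ := h2 c v
      exact ⟨ordOf v j, lab j, (ftp_ne_iff φ lab v _ _).2 ⟨j, rfl, rfl⟩, hj⟩
    · intro c
      have key := count_split lab v (fun β θ => φ.psi c (lab v) β θ)
      have := h3 c v
      rw [key] at this
      have hmod : (∑ θ : WOrd, ∑ β : τ → Bool,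
          if φ.psi c (lab v) β θ = true then wcount lab v θ β else 0) % φ.l c
        = (∑ θ : WOrd, ∑ β : τ → Bool,
          if φ.psi c (lab v) β θ = true then (ftp φ lab v θ β).2 c else 0) % φ.l c := by
        rw [Finset.sum_nat_mod]
        conv_rhs => rw [Finset.sum_nat_mod]
        congr 1
        refine Finset.sum_congr rfl (fun θ _ => ?_)
        rw [Finset.sum_nat_mod]
        conv_rhs => rw [Finset.sum_nat_mod]
        congr 1
        refine Finset.sum_congr rfl (fun β _ => ?_)
        unfold ftp
        split <;> simp [Nat.mod_mod_of_dvd]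
      rwa [hmod] at this
  · intro h
    refine ⟨?_, ?_, ?_⟩
    · intro i j
      exact (h i).1 (ordOf i j) (lab j) ((ftp_ne_iff φ lab i _ _).2 ⟨j, rfl, rfl⟩)
    · intro c i
      obtain ⟨θ, β, hne, hc⟩ := (h i).2.1 c
      obtain ⟨w, hw1, hw2⟩ := (ftp_ne_iff φ lab i θ β).1 hne
      exact ⟨w, by rw [hw1, hw2]; exact hc⟩
    · intro c i
      have := (h i).2.2 c
      have key := count_split lab i (fun β θ => φ.psi c (lab i) β θ)
      rw [key]
      have hmod : (∑ θ : WOrd, ∑ β : τ → Bool,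
          if φ.psi c (lab i) β θ = true then wcount lab i θ β else 0) % φ.l c
        = (∑ θ : WOrd, ∑ β : τ → Bool,
          if φ.psi c (lab i) β θ = true then (ftp φ lab i θ β).2 c else 0) % φ.l c := by
        rw [Finset.sum_nat_mod]
        conv_rhs => rw [Finset.sum_nat_mod]
        congr 1
        refine Finset.sum_congr rfl (fun θ _ => ?_)
        rw [Finset.sum_nat_mod]
        conv_rhs => rw [Finset.sum_nat_mod]
        congr 1
        refine Finset.sum_congr rfl (fun β _ => ?_)
        unfold ftp
        split <;> simp [Nat.mod_mod_of_dvd]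
      rwa [hmod]
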